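/- Let 0 < r < 1 and let (T₁,…,T_d) be a doubly commuting tuple of invertible bounded operators in C_{1,r} on a complex Hilbert space H. Then there exists a unique family of mutually orthogonal closed subspaces (H_ω), indexed by the 2^d functions ω : {1,…,d} → {1,2}, whose orthogonal direct sum is H, such that: (1) each H_ω is a joint reducing subspace for T₁,…,T_d; and (2) for each ω and each i ∈ {1,…,d}, if ω(i) = 1 then (1+r²)‖x‖² = ‖T_i x‖² + r²‖T_i⁻* x‖² for all x ∈ H_ω (i.e. T_i restricted to H_ω is of class 𝒞_{1,r}), while if ω(i) = 2 then there is no nonzero closed subspace L of H_ω reducing T_i with (1+r²)‖x‖² = ‖T_i x‖² + r²‖T_i⁻* x‖² for all x ∈ L (i.e. T_i restricted to H_ω is a c.n.u. C_{1,r}-contraction). Some of the subspaces H_ω may be the zero subspace. -/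

import Mathlib

open ContinuousLinearMap

variable {H : Type*} [NormedAddCommGroup H] [InnerProductSpace ℂ H] [CompleteSpace H]

/-- `T ∈ C_{1,r}`: `T` is invertible, `‖T‖ ≤ 1` and `‖r • T⁻¹‖ ≤ 1`. -/
def MemC1r (r : ℝ) (T : H →L[ℂ] H) : Prop :=
  IsUnit T ∧ ‖T‖ ≤ 1 ∧ ‖(r : ℂ) • Ring.inverse T‖ ≤ 1

/-- A tuple of operators is doubly commuting if `TᵢTⱼ = TⱼTᵢ` and `TᵢTⱼ* = Tⱼ*Tᵢ` for `i ≠ j`. -/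
def DoublyCommuting {d : ℕ} (T : Fin d → H →L[ℂ] H) : Prop :=
  ∀ i j, i ≠ j → T i * T j = T j * T i ∧ T i * adjoint (T j) = adjoint (T j) * T i

/-- A closed subspace `L` reduces `T` if `L` is invariant under both `T` and `T*`. -/
def Reduces (T : H →L[ℂ] H) (L : Submodule ℂ H) : Prop :=
  ∀ x ∈ L, T x ∈ L ∧ adjoint T x ∈ L

/-- `T` restricted to `L` is of class `𝒞_{1,r}`:
`(1+r²)‖x‖² = ‖Tx‖² + r²‖T⁻*x‖²` for all `x ∈ L`. -/
def RestrictedScriptC1r (r : ℝ) (T : H →L[ℂ] H) (L : Submodule ℂ H) : Prop :=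
  ∀ x ∈ L, (1 + r ^ 2) * ‖x‖ ^ 2 = ‖T x‖ ^ 2 + r ^ 2 * ‖adjoint (Ring.inverse T) x‖ ^ 2

noncomputable section Stmt16Aux

namespace Stmt16Aux

local notation "⟪" x ", " y "⟫" => @inner ℂ _ _ x y

/-- The defect operator `T*T + r² T⁻¹T⁻* - (1+r²)·1`. -/
def Dop (r : ℝ) (T : H →L[ℂ] H) : H →L[ℂ] H :=
  adjoint T * T + ((r ^ 2 : ℝ) : ℂ) • (Ring.inverse T * adjoint (Ring.inverse T))
    - (((1 : ℝ) + r ^ 2 : ℝ) : ℂ) • 1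

/-- The multiplicative monoid generated by `T, T*, T⁻¹, T⁻*`. -/
def Mgen (T : H →L[ℂ] H) : Submonoid (H →L[ℂ] H) :=
  Submonoid.closure {T, adjoint T, Ring.inverse T, adjoint (Ring.inverse T)}

/-- The maximal joint reducing subspace on which `T` is of class `𝒞_{1,r}`. -/
def Wmax (r : ℝ) (T : H →L[ℂ] H) : Submodule ℂ H :=
  ⨅ S : Mgen T, LinearMap.ker ((Dop r T * (S : H →L[ℂ] H) : H →L[ℂ] H) : H →ₗ[ℂ] H)

lemma mem_Wmax_iff {r : ℝ} {T : H →L[ℂ] H} {x : H} :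
    x ∈ Wmax r T ↔ ∀ S ∈ Mgen T, Dop r T (S x) = 0 := by
  simp [Wmax, Submodule.mem_iInf, LinearMap.mem_ker, Subtype.forall, ContinuousLinearMap.mul_apply]

lemma isClosed_Wmax (r : ℝ) (T : H →L[ℂ] H) : IsClosed ((Wmax r T : Submodule ℂ H) : Set H) := by
  rw [Wmax, Submodule.coe_iInf]
  exact isClosed_iInter fun S => ContinuousLinearMap.isClosed_ker (Dop r T * (S : H →L[ℂ] H))

lemma inner_Dop_self (r : ℝ) (T : H →L[ℂ] H) (x : H) :
    ⟪Dop r T x, x⟫ =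
      ((‖T x‖ ^ 2 + r ^ 2 * ‖adjoint (Ring.inverse T) x‖ ^ 2 - (1 + r ^ 2) * ‖x‖ ^ 2 : ℝ) : ℂ) := by
  have h1 : ⟪(adjoint T * T) x, x⟫ = ((‖T x‖ ^ 2 : ℝ) : ℂ) := by
    rw [ContinuousLinearMap.mul_apply, adjoint_inner_left, inner_self_eq_norm_sq_to_K]
    norm_cast
  have h2 : ⟪(Ring.inverse T * adjoint (Ring.inverse T)) x, x⟫ =
      ((‖adjoint (Ring.inverse T) x‖ ^ 2 : ℝ) : ℂ) := by
    have e : (Ring.inverse T * adjoint (Ring.inverse T)) x =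
        adjoint (adjoint (Ring.inverse T)) (adjoint (Ring.inverse T) x) := by
      rw [ContinuousLinearMap.mul_apply, adjoint_adjoint]
    rw [e, adjoint_inner_left, inner_self_eq_norm_sq_to_K]
    norm_cast
  have h3 : ⟪x, x⟫ = ((‖x‖ ^ 2 : ℝ) : ℂ) := by
    rw [inner_self_eq_norm_sq_to_K]; norm_cast
  simp only [Dop, ContinuousLinearMap.sub_apply, ContinuousLinearMap.add_apply,
    ContinuousLinearMap.smul_apply, ContinuousLinearMap.one_apply]
  rw [inner_sub_left, inner_add_left, inner_smul_left, inner_smul_left, h1, h2, h3]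
  simp only [Complex.conj_ofReal]
  push_cast
  ring

/-- On a vector where the defect vanishes, the `𝒞_{1,r}` identity holds. -/
lemma norm_eq_of_Dop_eq_zero {r : ℝ} {T : H →L[ℂ] H} {x : H} (h : Dop r T x = 0) :
    (1 + r ^ 2) * ‖x‖ ^ 2 = ‖T x‖ ^ 2 + r ^ 2 * ‖adjoint (Ring.inverse T) x‖ ^ 2 := by
  have h0 := inner_Dop_self r T x
  rw [h, inner_zero_left] at h0
  have : (‖T x‖ ^ 2 + r ^ 2 * ‖adjoint (Ring.inverse T) x‖ ^ 2 - (1 + r ^ 2) * ‖x‖ ^ 2 : ℝ) = 0 := by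
    exact_mod_cast h0.symm
  linarith

lemma T_mem_Mgen (T : H →L[ℂ] H) : T ∈ Mgen T :=
  Submonoid.subset_closure (by simp)
lemma adjT_mem_Mgen (T : H →L[ℂ] H) : adjoint T ∈ Mgen T :=
  Submonoid.subset_closure (by simp)
lemma inv_mem_Mgen (T : H →L[ℂ] H) : Ring.inverse T ∈ Mgen T :=
  Submonoid.subset_closure (by simp)
lemma adjinv_mem_Mgen (T : H →L[ℂ] H) : adjoint (Ring.inverse T) ∈ Mgen T :=
  Submonoid.subset_closure (by simp)

lemma Wmax_mapsTo_gen {r : ℝ} {T A : H →L[ℂ] H} (hA : A ∈ Mgen T) {x : H}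
    (hx : x ∈ Wmax r T) : A x ∈ Wmax r T := by
  rw [mem_Wmax_iff] at hx ⊢
  intro S hS
  have := hx _ (mul_mem hS hA)
  simpa [ContinuousLinearMap.mul_apply] using this

/-- The defect vanishes on `Wmax`. -/
lemma Dop_eq_zero_of_mem_Wmax {r : ℝ} {T : H →L[ℂ] H} {x : H} (hx : x ∈ Wmax r T) :
    Dop r T x = 0 := by
  have := mem_Wmax_iff.1 hx 1 (one_mem _)
  simpa using this

/-- Generic commutation-with-inverse lemma. -/
lemma commute_of_mul_eq_one {R : Type*} [Ring R] {a b c : R} (h : Commute b a)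
    (h1 : a * c = 1) (h2 : c * a = 1) : Commute b c := by
  show b * c = c * b
  calc b * c = c * a * (b * c) := by rw [h2, one_mul]
    _ = c * (a * b) * c := by rw [mul_assoc c a (b * c), ← mul_assoc a b c, ← mul_assoc]
    _ = c * (b * a) * c := by rw [← h.eq]
    _ = c * b * (a * c) := by rw [← mul_assoc c b a, mul_assoc (c * b) a c]
    _ = c * b := by rw [h1, mul_one]

lemma adj_mul_adjinv {T : H →L[ℂ] H} (hu : IsUnit T) :
    adjoint T * adjoint (Ring.inverse T) = 1 := by
  rw [← star_eq_adjoint, ← star_eq_adjoint, ← star_mul, Ring.inverse_mul_cancel _ hu, star_one]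

lemma adjinv_mul_adj {T : H →L[ℂ] H} (hu : IsUnit T) :
    adjoint (Ring.inverse T) * adjoint T = 1 := by
  rw [← star_eq_adjoint, ← star_eq_adjoint, ← star_mul, Ring.mul_inverse_cancel _ hu, star_one]

/-- Anything commuting with `T` and `T*` commutes with all members of `Mgen T`. -/
lemma commute_mem_Mgen {T B : H →L[ℂ] H} (hu : IsUnit T) (h1 : Commute B T)
    (h2 : Commute B (adjoint T)) {S : H →L[ℂ] H} (hS : S ∈ Mgen T) : Commute B S := by
  have h3 : Commute B (Ring.inverse T) :=
    commute_of_mul_eq_one h1 (Ring.mul_inverse_cancel _ hu) (Ring.inverse_mul_cancel _ hu)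
  have h4 : Commute B (adjoint (Ring.inverse T)) :=
    commute_of_mul_eq_one h2 (adj_mul_adjinv hu) (adjinv_mul_adj hu)
  induction hS using Submonoid.closure_induction with
  | mem A hA =>
    rcases hA with h | h | h | h
    · exact h ▸ h1
    · exact h ▸ h2
    · exact h ▸ h3
    · exact h ▸ h4
  | one => exact Commute.one_right B
  | mul A A' _ _ hA hA' => exact hA.mul_right hA'

lemma commute_Dop {r : ℝ} {T B : H →L[ℂ] H} (hu : IsUnit T) (h1 : Commute B T)
    (h2 : Commute B (adjoint T)) : Commute B (Dop r T) := by
  have h3 : Commute B (Ring.inverse T) :=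
    commute_of_mul_eq_one h1 (Ring.mul_inverse_cancel _ hu) (Ring.inverse_mul_cancel _ hu)
  have h4 : Commute B (adjoint (Ring.inverse T)) :=
    commute_of_mul_eq_one h2 (adj_mul_adjinv hu) (adjinv_mul_adj hu)
  exact ((h2.mul_right h1).add_right ((h3.mul_right h4).smul_right _)).sub_right
    ((Commute.one_right B).smul_right _)

/-- Anything commuting with `T` and `T*` leaves `Wmax` invariant. -/
lemma Wmax_invariant {r : ℝ} {T B : H →L[ℂ] H} (hu : IsUnit T) (h1 : Commute B T)
    (h2 : Commute B (adjoint T)) {x : H} (hx : x ∈ Wmax r T) : B x ∈ Wmax r T := by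
  rw [mem_Wmax_iff] at hx ⊢
  intro S hS
  have hc : Dop r T * S * B = B * (Dop r T * S) :=
    ((commute_Dop (r := r) hu h1 h2).symm.mul_left (commute_mem_Mgen hu h1 h2 hS).symm).eq
  have := congrFun (congrArg DFunLike.coe hc) x
  simp only [ContinuousLinearMap.mul_apply] at this
  rw [this, hx S hS, map_zero]

/-- If `K` is invariant under `adjoint A`, then `Kᗮ` is invariant under `A`. -/
lemma orth_invariant {K : Submodule ℂ H} {A : H →L[ℂ] H}
    (h : ∀ x ∈ K, adjoint A x ∈ K) : ∀ y ∈ Kᗮ, A y ∈ Kᗮ := by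
  intro y hy
  rw [Submodule.mem_orthogonal]
  intro u hu
  rw [← adjoint_inner_left]
  exact (Submodule.mem_orthogonal _ _).1 hy _ (h u hu)

/-- Projection formula: if `K` is invariant under `A` and `adjoint A`, then the orthogonal
projection onto `K` commutes with `A`. -/
lemma proj_comm {K : Submodule ℂ H} [K.HasOrthogonalProjection] {A : H →L[ℂ] H}
    (h1 : ∀ x ∈ K, A x ∈ K) (h2 : ∀ x ∈ K, adjoint A x ∈ K) (x : H) :
    (Submodule.orthogonalProjectionOnto K (A x) : H) = A (Submodule.orthogonalProjectionOnto K x) := by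
  have hx : A x = A ((Submodule.orthogonalProjectionOnto K x : H)) + A (x - Submodule.orthogonalProjectionOnto K x) := by
    rw [← map_add, add_sub_cancel]
  have m1 : A ((Submodule.orthogonalProjectionOnto K x : H)) ∈ K := h1 _ (Submodule.orthogonalProjectionOnto K x).2
  have m2 : A (x - Submodule.orthogonalProjectionOnto K x) ∈ Kᗮ :=
    orth_invariant h2 _ (Submodule.sub_starProjection_mem_orthogonal x)
  rw [hx, map_add, Submodule.orthogonalProjectionOnto_apply_of_mem_orthogonal m2, add_zero]
  exact congrArg Subtype.val (Submodule.orthogonalProjectionOnto_mem_subspace_eq_self (⟨_, m1⟩ : K))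

/-- The commutation, as a `Commute` statement about `subtypeL ∘ orthogonalProjection`. -/
lemma proj_commute {K : Submodule ℂ H} [K.HasOrthogonalProjection] {A : H →L[ℂ] H}
    (h1 : ∀ x ∈ K, A x ∈ K) (h2 : ∀ x ∈ K, adjoint A x ∈ K) :
    Commute (K.subtypeL.comp (Submodule.orthogonalProjectionOnto K)) A := by
  ext x
  simp only [ContinuousLinearMap.mul_apply, ContinuousLinearMap.comp_apply, Submodule.subtypeL_apply]
  exact proj_comm h1 h2 x

/-- If a closed subspace is invariant under `A` and `adjoint A`, where `A * C = C * A = 1`,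
then it is invariant under `C`. -/
lemma inv_invariant {A C : H →L[ℂ] H} (hAC : A * C = 1) (hCA : C * A = 1)
    {L : Submodule ℂ H} [L.HasOrthogonalProjection]
    (h1 : ∀ x ∈ L, A x ∈ L) (h2 : ∀ x ∈ L, adjoint A x ∈ L) :
    ∀ x ∈ L, C x ∈ L := by
  intro x hx
  set u : H := (Submodule.orthogonalProjectionOnto L (C x) : H) with hu
  have hum : u ∈ L := (Submodule.orthogonalProjectionOnto L (C x)).2
  have hv : C x - u ∈ Lᗮ := Submodule.sub_starProjection_mem_orthogonal (C x)
  have hACx : A (C x) = x := by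
    have := congrFun (congrArg DFunLike.coe hAC) x
    simpa [ContinuousLinearMap.mul_apply] using this
  have hTv1 : A (C x - u) ∈ Lᗮ := orth_invariant h2 _ hv
  have hTv2 : A (C x - u) ∈ L := by
    have : A (C x - u) = x - A u := by rw [map_sub, hACx]
    rw [this]
    exact sub_mem hx (h1 _ hum)
  have hTv0 : A (C x - u) = 0 := by
    have := (Submodule.mem_orthogonal _ _).1 hTv1 _ hTv2
    exact inner_self_eq_zero.1 this
  have hv0 : C x - u = 0 := by
    have := congrFun (congrArg DFunLike.coe hCA) (C x - u)
    simp only [ContinuousLinearMap.mul_apply, hTv0, map_zero, one_apply] at this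
    exact this.symm
  have : C x = u := by rwa [sub_eq_zero] at hv0
  rw [this]; exact hum

/-- Maximality: any closed reducing subspace on which the `𝒞_{1,r}` identity holds is
contained in `Wmax`. -/
lemma le_Wmax {r : ℝ} {T : H →L[ℂ] H} (hu : IsUnit T) {L : Submodule ℂ H}
    (hLc : IsClosed (L : Set H))
    (hred : ∀ x ∈ L, T x ∈ L ∧ adjoint T x ∈ L)
    (hscript : ∀ x ∈ L,
      (1 + r ^ 2) * ‖x‖ ^ 2 = ‖T x‖ ^ 2 + r ^ 2 * ‖adjoint (Ring.inverse T) x‖ ^ 2) :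
    L ≤ Wmax r T := by
  haveI : CompleteSpace L := hLc.completeSpace_coe
  have hT : ∀ x ∈ L, T x ∈ L := fun x hx => (hred x hx).1
  have hTa : ∀ x ∈ L, adjoint T x ∈ L := fun x hx => (hred x hx).2
  have hInv : ∀ x ∈ L, Ring.inverse T x ∈ L :=
    inv_invariant (Ring.mul_inverse_cancel _ hu) (Ring.inverse_mul_cancel _ hu) hT hTa
  have hInvA : ∀ x ∈ L, adjoint (Ring.inverse T) x ∈ L := by
    refine inv_invariant (adj_mul_adjinv hu) (adjinv_mul_adj hu) hTa ?_
    intro x hx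
    rw [adjoint_adjoint]
    exact hT x hx
  have hD : ∀ x ∈ L, Dop r T x ∈ L := by
    intro x hx
    simp only [Dop, ContinuousLinearMap.sub_apply, ContinuousLinearMap.add_apply,
      ContinuousLinearMap.smul_apply, ContinuousLinearMap.one_apply, ContinuousLinearMap.mul_apply]
    exact sub_mem (add_mem (hTa _ (hT _ hx)) (Submodule.smul_mem _ _ (hInv _ (hInvA _ hx))))
      (Submodule.smul_mem _ _ hx)
  -- the defect vanishes identically on `L`
  have hDzero : ∀ x ∈ L, Dop r T x = 0 := by
    have hA0 : ((Dop r T : H →ₗ[ℂ] H).restrict hD) = 0 := by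
      rw [← inner_map_self_eq_zero]
      intro z
      rw [Submodule.coe_inner, LinearMap.restrict_coe_apply]
      simp only [ContinuousLinearMap.coe_coe]
      rw [inner_Dop_self]
      norm_cast
      have h := hscript _ z.2
      have hzn : ‖z‖ = ‖(z : H)‖ := rfl
      rw [hzn]
      linarith
    intro x hx
    have h1 := LinearMap.congr_fun hA0 (⟨x, hx⟩ : L)
    have h2 := congrArg Subtype.val h1
    simpa [LinearMap.restrict_coe_apply] using h2
  have hSL : ∀ S ∈ Mgen T, ∀ y ∈ L, S y ∈ L := by
    intro S hS
    induction hS using Submonoid.closure_induction with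
    | mem A hA =>
      rcases hA with h | h | h | h
      · exact h ▸ hT
      · exact h ▸ hTa
      · exact h ▸ hInv
      · exact h ▸ hInvA
    | one => intro y hy; simpa using hy
    | mul A A' hA hA' ihA ihA' =>
      intro y hy
      rw [ContinuousLinearMap.mul_apply]
      exact ihA _ (ihA' y hy)
  intro x hx
  rw [mem_Wmax_iff]
  intro S hS
  exact hDzero _ (hSL S hS x hx)

section Family

variable {d : ℕ}

/-- The subspace attached to the label `b` at one coordinate. -/
def Vsp (r : ℝ) (T : H →L[ℂ] H) (b : Bool) : Submodule ℂ H :=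
  if b then Wmax r T else (Wmax r T)ᗮ

lemma Vsp_true (r : ℝ) (T : H →L[ℂ] H) : Vsp r T true = Wmax r T := rfl
lemma Vsp_false (r : ℝ) (T : H →L[ℂ] H) : Vsp r T false = (Wmax r T)ᗮ := rfl

lemma isClosed_Vsp (r : ℝ) (T : H →L[ℂ] H) (b : Bool) : IsClosed ((Vsp r T b : Submodule ℂ H) : Set H) := by
  cases b
  · exact Submodule.isClosed_orthogonal _
  · exact isClosed_Wmax r T

/-- The canonical family. -/
def HFc (r : ℝ) (T : Fin d → H →L[ℂ] H) (ω : Fin d → Bool) : Submodule ℂ H :=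
  ⨅ i, Vsp r (T i) (ω i)

lemma isClosed_HFc (r : ℝ) (T : Fin d → H →L[ℂ] H) (ω : Fin d → Bool) :
    IsClosed ((HFc r T ω : Submodule ℂ H) : Set H) := by
  rw [HFc, Submodule.coe_iInf]
  exact isClosed_iInter fun i => isClosed_Vsp r (T i) (ω i)

variable {r : ℝ} {T : Fin d → H →L[ℂ] H}

section WithHyp

variable (hu : ∀ i, IsUnit (T i))
  (hdc : ∀ i j, i ≠ j → T i * T j = T j * T i ∧ T i * adjoint (T j) = adjoint (T j) * T i)

include hu hdc

/-- Every `W j := Wmax r (T j)` is invariant under all `T i` and `adjoint (T i)`. -/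
lemma Wmax_biinvariant (i j : Fin d) :
    (∀ x ∈ Wmax r (T j), T i x ∈ Wmax r (T j)) ∧
    (∀ x ∈ Wmax r (T j), adjoint (T i) x ∈ Wmax r (T j)) := by
  by_cases hij : i = j
  · subst hij
    exact ⟨fun x hx => Wmax_mapsTo_gen (T_mem_Mgen _) hx,
      fun x hx => Wmax_mapsTo_gen (adjT_mem_Mgen _) hx⟩
  · have hji : j ≠ i := fun h => hij h.symm
    have c1 : Commute (T i) (T j) := (hdc i j hij).1
    have c2 : Commute (T i) (adjoint (T j)) := (hdc i j hij).2
    have c3 : Commute (adjoint (T i)) (T j) := ((hdc j i hji).2).symm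
    have c4 : Commute (adjoint (T i)) (adjoint (T j)) := by
      show adjoint (T i) * adjoint (T j) = adjoint (T j) * adjoint (T i)
      rw [← star_eq_adjoint, ← star_eq_adjoint, ← star_mul, ← star_mul, (hdc i j hij).1]
    exact ⟨fun x hx => Wmax_invariant (hu j) c1 c2 hx,
      fun x hx => Wmax_invariant (hu j) c3 c4 hx⟩

lemma Vsp_biinvariant (i j : Fin d) (b : Bool) :
    (∀ x ∈ Vsp r (T j) b, T i x ∈ Vsp r (T j) b) ∧
    (∀ x ∈ Vsp r (T j) b, adjoint (T i) x ∈ Vsp r (T j) b) := by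
  cases b
  · rw [Vsp_false]
    constructor
    · exact orth_invariant (Wmax_biinvariant hu hdc i j).2
    · refine orth_invariant ?_
      intro x hx
      rw [adjoint_adjoint]
      exact (Wmax_biinvariant hu hdc i j).1 x hx
  · rw [Vsp_true]
    exact Wmax_biinvariant hu hdc i j

lemma HFc_reduces (ω : Fin d → Bool) (i : Fin d) :
    ∀ x ∈ HFc r T ω, T i x ∈ HFc r T ω ∧ adjoint (T i) x ∈ HFc r T ω := by
  intro x hx
  simp only [HFc, Submodule.mem_iInf] at hx ⊢
  exact ⟨fun j => (Vsp_biinvariant hu hdc i j (ω j)).1 x (hx j),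
    fun j => (Vsp_biinvariant hu hdc i j (ω j)).2 x (hx j)⟩

omit hu hdc in
/-- Orthogonal projection onto `Wmax`, as an endomorphism of `H`. -/
noncomputable def PW (r : ℝ) (T : H →L[ℂ] H) : H →L[ℂ] H :=
  haveI : CompleteSpace (Wmax r T) := (isClosed_Wmax r T).completeSpace_coe
  (Wmax r T).subtypeL.comp (Submodule.orthogonalProjectionOnto (Wmax r T))

omit hu hdc in
lemma PW_mem (r : ℝ) (T : H →L[ℂ] H) (x : H) : PW r T x ∈ Wmax r T := by
  haveI : CompleteSpace (Wmax r T) := (isClosed_Wmax r T).completeSpace_coe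
  exact (Submodule.orthogonalProjectionOnto (Wmax r T) x).2

omit hu hdc in
lemma PW_apply_orth (r : ℝ) (T : H →L[ℂ] H) {x : H} (hx : x ∈ (Wmax r T)ᗮ) :
    PW r T x = 0 := by
  haveI : CompleteSpace (Wmax r T) := (isClosed_Wmax r T).completeSpace_coe
  show ((Submodule.orthogonalProjectionOnto (Wmax r T) x : Wmax r T) : H) = 0
  rw [Submodule.orthogonalProjectionOnto_apply_of_mem_orthogonal hx]
  rfl

omit hu hdc in
lemma sub_PW_mem_orth (r : ℝ) (T : H →L[ℂ] H) (x : H) : x - PW r T x ∈ (Wmax r T)ᗮ := by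
  haveI : CompleteSpace (Wmax r T) := (isClosed_Wmax r T).completeSpace_coe
  exact Submodule.sub_starProjection_mem_orthogonal x

omit hu hdc in
lemma PW_selfadjoint (r : ℝ) (T : H →L[ℂ] H) : adjoint (PW r T) = PW r T := by
  haveI : CompleteSpace (Wmax r T) := (isClosed_Wmax r T).completeSpace_coe
  rw [← star_eq_adjoint]
  exact isSelfAdjoint_starProjection (Wmax r T)

lemma PW_mapsTo_Vsp (i j : Fin d) (b : Bool) :
    ∀ x ∈ Vsp r (T i) b, PW r (T j) x ∈ Vsp r (T i) b := by
  haveI : CompleteSpace (Wmax r (T j)) := (isClosed_Wmax r (T j)).completeSpace_coe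
  have hVtrue : ∀ x ∈ Vsp r (T i) true, PW r (T j) x ∈ Vsp r (T i) true := by
    rw [Vsp_true]
    by_cases hij : i = j
    · subst hij
      exact fun x _ => PW_mem r (T i) x
    · have c1 : Commute (PW r (T j)) (T i) :=
        proj_commute (Wmax_biinvariant hu hdc i j).1 (Wmax_biinvariant hu hdc i j).2
      have c2 : Commute (PW r (T j)) (adjoint (T i)) :=
        proj_commute (Wmax_biinvariant hu hdc i j).2
          (fun y hy => by rw [adjoint_adjoint]; exact (Wmax_biinvariant hu hdc i j).1 y hy)
      exact fun x hx => Wmax_invariant (hu i) c1 c2 hx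
  cases b
  · rw [Vsp_false]
    by_cases hij : i = j
    · subst hij
      intro x hx
      rw [PW_apply_orth r (T i) hx]
      exact zero_mem _
    · refine orth_invariant ?_
      intro x hx
      rw [PW_selfadjoint]
      exact hVtrue x hx
  · exact hVtrue

lemma top_le_biInf_sup :
    ∀ s : Finset (Fin d), (⊤ : Submodule ℂ H) ≤ ⨆ ω : Fin d → Bool, ⨅ i ∈ s, Vsp r (T i) (ω i) := by
  classical
  intro s
  induction s using Finset.induction_on with
  | empty =>
    intro x _
    refine Submodule.mem_iSup_of_mem (fun _ => true) ?_
    simp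
  | @insert j s hjs ih =>
    intro x hxt
    have hx : x ∈ ⨆ ω : Fin d → Bool, ⨅ i ∈ s, Vsp r (T i) (ω i) := ih hxt
    refine Submodule.iSup_induction
      (motive := fun z => z ∈ ⨆ ω : Fin d → Bool, ⨅ i ∈ insert j s, Vsp r (T i) (ω i))
      (fun ω : Fin d → Bool => ⨅ i ∈ s, Vsp r (T i) (ω i)) hx ?_ (zero_mem _)
      (fun a b ha hb => add_mem ha hb)
    intro ω y hy
    have hyK : ∀ i ∈ s, y ∈ Vsp r (T i) (ω i) := by
      simpa [Submodule.mem_iInf] using hy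
    have h1 : PW r (T j) y ∈ ⨅ i ∈ insert j s, Vsp r (T i) (Function.update ω j true i) := by
      simp only [Submodule.mem_iInf]
      intro i hi
      rcases Finset.mem_insert.1 hi with h | h
      · subst h
        rw [Function.update_self, Vsp_true]
        exact PW_mem r (T i) y
      · have hij : i ≠ j := by rintro rfl; exact hjs h
        rw [Function.update_of_ne hij]
        exact PW_mapsTo_Vsp hu hdc i j (ω i) y (hyK i h)
    have h2 : y - PW r (T j) y ∈ ⨅ i ∈ insert j s, Vsp r (T i) (Function.update ω j false i) := by
      simp only [Submodule.mem_iInf]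
      intro i hi
      rcases Finset.mem_insert.1 hi with h | h
      · subst h
        rw [Function.update_self, Vsp_false]
        exact sub_PW_mem_orth r (T i) y
      · have hij : i ≠ j := by rintro rfl; exact hjs h
        rw [Function.update_of_ne hij]
        exact sub_mem (hyK i h) (PW_mapsTo_Vsp hu hdc i j (ω i) y (hyK i h))
    have hxy : PW r (T j) y + (y - PW r (T j) y) = y := by abel
    rw [← hxy]
    exact add_mem (Submodule.mem_iSup_of_mem _ h1) (Submodule.mem_iSup_of_mem _ h2)

lemma iSup_HFc_eq_top : (⨆ ω : Fin d → Bool, HFc r T ω) = ⊤ := by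
  refine le_antisymm le_top ?_
  refine le_trans (top_le_biInf_sup (r := r) hu hdc Finset.univ) (iSup_mono fun ω => le_of_eq ?_)
  simp [HFc]

end WithHyp

/-- Mutual orthogonality of the canonical family. -/
lemma HFc_orth {ω ω' : Fin d → Bool} (hne : ω ≠ ω') :
    ∀ x ∈ HFc r T ω, ∀ y ∈ HFc r T ω', (inner ℂ x y : ℂ) = 0 := by
  obtain ⟨i, hi⟩ := Function.ne_iff.1 hne
  intro x hx y hy
  have hxi : x ∈ Vsp r (T i) (ω i) := (Submodule.mem_iInf _).1 hx i
  have hyi : y ∈ Vsp r (T i) (ω' i) := (Submodule.mem_iInf _).1 hy i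
  cases hb : ω i with
  | true =>
    have hb' : ω' i = false := by
      cases hb2 : ω' i
      · rfl
      · exact absurd (hb.trans hb2.symm) hi
    rw [hb, Vsp_true] at hxi
    rw [hb', Vsp_false] at hyi
    exact ((Submodule.mem_orthogonal _ _).1 hyi x hxi).symm ▸ rfl
  | false =>
    have hb' : ω' i = true := by
      cases hb2 : ω' i
      · exact absurd (hb.trans hb2.symm) hi
      · rfl
    rw [hb, Vsp_false] at hxi
    rw [hb', Vsp_true] at hyi
    exact (Submodule.mem_orthogonal' _ _).1 hxi y hyi

/-- On pieces with label `true` at `i`, the identity holds. -/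
lemma HFc_script {ω : Fin d → Bool} {i : Fin d} (hωi : ω i = true) :
    ∀ x ∈ HFc r T ω,
      (1 + r ^ 2) * ‖x‖ ^ 2 = ‖T i x‖ ^ 2 + r ^ 2 * ‖adjoint (Ring.inverse (T i)) x‖ ^ 2 := by
  intro x hx
  have hxi : x ∈ Vsp r (T i) (ω i) := (Submodule.mem_iInf _).1 hx i
  rw [hωi, Vsp_true] at hxi
  exact norm_eq_of_Dop_eq_zero (Dop_eq_zero_of_mem_Wmax hxi)

lemma HFc_le_orth {ω : Fin d → Bool} {i : Fin d} (hωi : ω i = false) :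
    HFc r T ω ≤ (Wmax r (T i))ᗮ := by
  have h := iInf_le (fun j => Vsp r (T j) (ω j)) i
  rwa [hωi, Vsp_false] at h

/-- Key uniqueness step: a closed subspace reducing `T` in which no nonzero closed reducing
subspace satisfies the identity is orthogonal to `Wmax`. -/
lemma le_orth_of_cnu {T : H →L[ℂ] H} (hu : IsUnit T) {K : Submodule ℂ H}
    (hKc : IsClosed (K : Set H))
    (hKred : ∀ x ∈ K, T x ∈ K ∧ adjoint T x ∈ K)
    (hcnu : ∀ L : Submodule ℂ H, IsClosed (L : Set H) → L ≤ K →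
      (∀ x ∈ L, T x ∈ L ∧ adjoint T x ∈ L) →
      (∀ x ∈ L, (1 + r ^ 2) * ‖x‖ ^ 2 = ‖T x‖ ^ 2 + r ^ 2 * ‖adjoint (Ring.inverse T) x‖ ^ 2) →
      L = ⊥) :
    K ≤ (Wmax r T)ᗮ := by
  haveI : CompleteSpace K := hKc.completeSpace_coe
  have hL0bot : K ⊓ Wmax r T = ⊥ := by
    refine hcnu (K ⊓ Wmax r T) ?_ inf_le_left ?_ ?_
    · rw [Submodule.coe_inf]
      exact hKc.inter (isClosed_Wmax r T)
    · intro x hx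
      obtain ⟨h1, h2⟩ := Submodule.mem_inf.1 hx
      exact ⟨Submodule.mem_inf.2 ⟨(hKred x h1).1, Wmax_mapsTo_gen (T_mem_Mgen T) h2⟩,
        Submodule.mem_inf.2 ⟨(hKred x h1).2, Wmax_mapsTo_gen (adjT_mem_Mgen T) h2⟩⟩
    · intro x hx
      exact norm_eq_of_Dop_eq_zero (Dop_eq_zero_of_mem_Wmax (Submodule.mem_inf.1 hx).2)
  intro x hx
  rw [Submodule.mem_orthogonal]
  intro u hum
  set PK : H →L[ℂ] H := K.subtypeL.comp (Submodule.orthogonalProjectionOnto K) with hPK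
  have c1 : Commute PK T := proj_commute (fun y hy => (hKred y hy).1) (fun y hy => (hKred y hy).2)
  have c2 : Commute PK (adjoint T) := proj_commute (fun y hy => (hKred y hy).2)
      (fun y hy => by rw [adjoint_adjoint]; exact (hKred y hy).1)
  have hPKu : PK u ∈ Wmax r T := Wmax_invariant hu c1 c2 hum
  have hPKuK : PK u ∈ K := (Submodule.orthogonalProjectionOnto K u).2
  have hPKu0 : PK u = 0 := by
    have h0 : PK u ∈ K ⊓ Wmax r T := Submodule.mem_inf.2 ⟨hPKuK, hPKu⟩
    rw [hL0bot] at h0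
    simpa using h0
  have huo : u ∈ Kᗮ := by
    have h := Submodule.sub_starProjection_mem_orthogonal (K := K) u
    have he : u - PK u = u := by rw [hPKu0, sub_zero]
    rw [← he]
    exact h
  exact (Submodule.mem_orthogonal' _ _).1 huo x hx

end Family

end Stmt16Aux
end Stmt16Aux


theorem stmt16 (r : ℝ) (hr0 : 0 < r) (hr1 : r < 1) (d : ℕ) (T : Fin d → H →L[ℂ] H)
    (hu : ∀ i, IsUnit (T i)) (hdc : DoublyCommuting T) (hmem : ∀ i, MemC1r r (T i)) :
    ∃! Hf : (Fin d → Bool) → Submodule ℂ H,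
      (∀ ω, IsClosed (Hf ω : Set H)) ∧
      (∀ ω ω', ω ≠ ω' → ∀ x ∈ Hf ω, ∀ y ∈ Hf ω', (inner ℂ x y : ℂ) = 0) ∧
      (⨆ ω, Hf ω) = ⊤ ∧
      (∀ ω i, Reduces (T i) (Hf ω)) ∧
      (∀ ω i,
        (ω i = true → RestrictedScriptC1r r (T i) (Hf ω)) ∧
        (ω i = false → ¬∃ L : Submodule ℂ H, L ≠ ⊥ ∧ IsClosed (L : Set H) ∧ L ≤ Hf ω ∧
          Reduces (T i) L ∧ RestrictedScriptC1r r (T i) L)) := by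
  classical
  have hdc' : ∀ i j, i ≠ j → T i * T j = T j * T i ∧
      T i * adjoint (T j) = adjoint (T j) * T i := hdc
  refine ⟨Stmt16Aux.HFc r T, ⟨fun ω => Stmt16Aux.isClosed_HFc r T ω,
    fun ω ω' hne => Stmt16Aux.HFc_orth hne,
    Stmt16Aux.iSup_HFc_eq_top hu hdc', ?_, ?_⟩, ?_⟩
  · intro ω i x hx
    exact Stmt16Aux.HFc_reduces hu hdc' ω i x hx
  · intro ω i
    constructor
    · intro hωi x hx
      exact Stmt16Aux.HFc_script hωi x hx
    · rintro hωi ⟨L, hLbot, hLc, hLle, hLred, hLscript⟩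
      have h1 : L ≤ Stmt16Aux.Wmax r (T i) := Stmt16Aux.le_Wmax (hu i) hLc hLred hLscript
      have h2 : L ≤ (Stmt16Aux.Wmax r (T i))ᗮ :=
        le_trans hLle (Stmt16Aux.HFc_le_orth hωi)
      have hbot : L ≤ ⊥ :=
        le_trans (le_inf h1 h2) (Submodule.orthogonal_disjoint _).le_bot
      exact hLbot (le_bot_iff.1 hbot)
  · -- uniqueness
    rintro g ⟨hgc, hgorth, hgsup, hgred, hgprop⟩
    funext ω
    have hle : ∀ ω', g ω' ≤ Stmt16Aux.HFc r T ω' := by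
      intro ω' x hx
      rw [Stmt16Aux.HFc, Submodule.mem_iInf]
      intro i
      cases hb : ω' i with
      | true =>
        rw [Stmt16Aux.Vsp_true]
        exact Stmt16Aux.le_Wmax (hu i) (hgc ω') (hgred ω' i) ((hgprop ω' i).1 hb) hx
      | false =>
        rw [Stmt16Aux.Vsp_false]
        refine Stmt16Aux.le_orth_of_cnu (hu i) (hgc ω') (hgred ω' i) ?_ hx
        intro L hLc hLle hLred hLscript
        by_contra hbot
        exact (hgprop ω' i).2 hb ⟨L, hbot, hLc, hLle, hLred, hLscript⟩
    refine le_antisymm (hle ω) ?_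
    intro x hx
    have hx2 : x ∈ ⨆ ω', g ω' := by rw [hgsup]; trivial
    have hsup_le : (⨆ ω', g ω') ≤ g ω ⊔ (Stmt16Aux.HFc r T ω)ᗮ := by
      refine iSup_le fun ω' => ?_
      by_cases h : ω' = ω
      · subst h; exact le_sup_left
      · refine le_trans (hle ω') (le_trans ?_ le_sup_right)
        intro y hy
        rw [Submodule.mem_orthogonal]
        intro u hu'
        exact Stmt16Aux.HFc_orth (fun hh => h hh.symm) u hu' y hy
    obtain ⟨a, ha, b, hb, hab⟩ := Submodule.mem_sup.1 (hsup_le hx2)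
    have haH : a ∈ Stmt16Aux.HFc r T ω := hle ω ha
    have hbH : b ∈ Stmt16Aux.HFc r T ω := by
      have hba : b = x - a := by rw [← hab]; abel
      rw [hba]; exact sub_mem hx haH
    have hb0 : b = 0 := by
      have h0 := (Submodule.mem_orthogonal _ _).1 hb b hbH
      exact inner_self_eq_zero.1 h0
    rw [← hab, hb0, add_zero]
    exact ha
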